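/- arXiv:1905.12121 — 11 statements merged into one kernel-verified Lean document; each statement's English description precedes it below -/
import Mathlib

section
/- Let d ∈ ℕ, let θ₀, θ* ∈ ℝ^d with θ₀ ≠ θ*, let R > 0 and η > 0. Set λ = ‖θ*‖, D = ‖θ₀ − θ*‖, γ₀ = min(R/D, 1/η), ρ = 1 − ηγ₀/(1 + exp(λ²γ₀)), and C = −1/log ρ. Then 0 < ρ < 1, and for every ε with 0 < ε < D and every natural number K with K ≥ C·log(D/ε), there exists a finite sequence x_0, …, x_{K−1} ∈ ℝ^d with ‖x_t‖ ≤ R for every t < K such that the OGD iterates θ_{t+1} = θ_t + η·x_t/(1 + exp(⟨θ_t, x_t⟩)) started from θ₀ satisfy ‖θ_K − θ*‖ ≤ ε. (This is Theorem 1: against the bounded L₂-norm defense with feasible set {x : ‖x‖ ≤ R}, a data poisoner can drive the learnt model to within ε of any target θ* using O(log(1/ε)) poisoning points.) -/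
lemma aux_contract {d : ℕ} (θs p : EuclideanSpace ℝ (Fin d)) (η γ₀ lam : ℝ)
    (hγpos : 0 < γ₀) (hηγ : η * γ₀ ≤ 1) (hηpos : 0 < η) (hlam : lam = ‖θs‖) :
    ‖p + (η / (1 + Real.exp ((inner ℝ p (γ₀ • (θs - p)) : ℝ)))) • (γ₀ • (θs - p)) - θs‖
      ≤ (1 - η * γ₀ / (1 + Real.exp (lam ^ 2 * γ₀))) * ‖p - θs‖ := by
  have hinner : (inner ℝ p (γ₀ • (θs - p)) : ℝ) ≤ lam ^ 2 * γ₀ := by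
    rw [real_inner_smul_right]
    have h2 : (inner ℝ p (θs - p) : ℝ)
        = (inner ℝ θs (θs - p) : ℝ) - ‖θs - p‖ ^ 2 := by
      have hpe : p = θs - (θs - p) := by abel
      calc (inner ℝ p (θs - p) : ℝ) = (inner ℝ (θs - (θs - p)) (θs - p) : ℝ) := by rw [← hpe]
        _ = (inner ℝ θs (θs - p) : ℝ) - (inner ℝ (θs - p) (θs - p) : ℝ) := by
            rw [inner_sub_left]
        _ = (inner ℝ θs (θs - p) : ℝ) - ‖θs - p‖ ^ 2 := by
            rw [real_inner_self_eq_norm_sq]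
    have h3 : (inner ℝ θs (θs - p) : ℝ) ≤ lam * ‖θs - p‖ := by
      rw [hlam]; exact real_inner_le_norm _ _
    have h4 : (inner ℝ p (θs - p) : ℝ) ≤ lam ^ 2 := by
      nlinarith [norm_nonneg (θs - p), sq_nonneg (lam / 2 - ‖θs - p‖), sq_nonneg lam]
    nlinarith
  obtain ⟨s, hs⟩ : ∃ s : ℝ, (inner ℝ p (γ₀ • (θs - p)) : ℝ) = s := ⟨_, rfl⟩
  rw [hs] at hinner ⊢
  have hdpos : (0:ℝ) < 1 + Real.exp s := by positivity
  have h1E : (0:ℝ) < 1 + Real.exp (lam ^ 2 * γ₀) := by positivity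
  have hstep : p + (η / (1 + Real.exp s)) • (γ₀ • (θs - p)) - θs
      = (1 - η * γ₀ / (1 + Real.exp s)) • (p - θs) := by
    match_scalars <;> field_simp <;> ring
  have hfac_nonneg : 0 ≤ 1 - η * γ₀ / (1 + Real.exp s) := by
    have h1 : η * γ₀ / (1 + Real.exp s) ≤ 1 := by
      rw [div_le_one hdpos]
      have := Real.exp_pos s
      linarith
    linarith
  have hfac_le : 1 - η * γ₀ / (1 + Real.exp s)
      ≤ 1 - η * γ₀ / (1 + Real.exp (lam ^ 2 * γ₀)) := by
    have hle : η * γ₀ / (1 + Real.exp (lam ^ 2 * γ₀)) ≤ η * γ₀ / (1 + Real.exp s) := by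
      rw [div_le_div_iff₀ h1E hdpos]
      have hexp : Real.exp s ≤ Real.exp (lam ^ 2 * γ₀) := Real.exp_le_exp.mpr hinner
      have hmul := mul_le_mul_of_nonneg_left hexp (by positivity : (0:ℝ) ≤ η * γ₀)
      nlinarith
    linarith
  rw [hstep, norm_smul, Real.norm_eq_abs, abs_of_nonneg hfac_nonneg]
  exact mul_le_mul_of_nonneg_right hfac_le (norm_nonneg _)

theorem stmt_0 (d : ℕ) (θ₀ θs : EuclideanSpace ℝ (Fin d)) (hne : θ₀ ≠ θs)
    (R η : ℝ) (hR : 0 < R) (hη : 0 < η)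
    (lam D γ₀ ρ C : ℝ)
    (hlam : lam = ‖θs‖) (hD : D = ‖θ₀ - θs‖)
    (hγ₀ : γ₀ = min (R / D) (1 / η))
    (hρ : ρ = 1 - η * γ₀ / (1 + Real.exp (lam ^ 2 * γ₀)))
    (hC : C = -1 / Real.log ρ) :
    0 < ρ ∧ ρ < 1 ∧
      ∀ ε : ℝ, 0 < ε → ε < D →
        ∀ K : ℕ, C * Real.log (D / ε) ≤ K →
          ∃ x θ : ℕ → EuclideanSpace ℝ (Fin d),
            θ 0 = θ₀ ∧
            (∀ t, θ (t + 1)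
              = θ t + (η / (1 + Real.exp ((inner ℝ (θ t) (x t) : ℝ)))) • x t) ∧
            (∀ t < K, ‖x t‖ ≤ R) ∧
            ‖θ K - θs‖ ≤ ε := by
  have hD0 : 0 < D := by
    rw [hD]
    exact norm_pos_iff.mpr (sub_ne_zero.mpr hne)
  have hγpos : 0 < γ₀ := by
    rw [hγ₀]
    exact lt_min (div_pos hR hD0) (div_pos one_pos hη)
  have hγD : γ₀ * D ≤ R := by
    have h1 : γ₀ ≤ R / D := hγ₀ ▸ min_le_left _ _
    calc γ₀ * D ≤ (R / D) * D := by nlinarith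
      _ = R := by field_simp
  have hηγ : η * γ₀ ≤ 1 := by
    have h1 : γ₀ ≤ 1 / η := hγ₀ ▸ min_le_right _ _
    have := mul_le_mul_of_nonneg_left h1 hη.le
    rwa [mul_one_div, div_self hη.ne'] at this
  have hEpos : (0:ℝ) < Real.exp (lam ^ 2 * γ₀) := Real.exp_pos _
  have h1E : (0:ℝ) < 1 + Real.exp (lam ^ 2 * γ₀) := by linarith
  have hρ0 : 0 < ρ := by
    rw [hρ]
    have h1 : η * γ₀ / (1 + Real.exp (lam ^ 2 * γ₀)) < 1 := by
      rw [div_lt_one h1E]; nlinarith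
    linarith
  have hρ1 : ρ < 1 := by
    rw [hρ]
    have h1 : 0 < η * γ₀ / (1 + Real.exp (lam ^ 2 * γ₀)) :=
      div_pos (by positivity) h1E
    linarith
  refine ⟨hρ0, hρ1, ?_⟩
  intro ε hε hεD K hK
  -- define the iterates
  refine ⟨fun t => γ₀ • (θs - Nat.rec θ₀ (fun _ p =>
      p + (η / (1 + Real.exp ((inner ℝ p (γ₀ • (θs - p)) : ℝ)))) • (γ₀ • (θs - p))) t),
    fun t => Nat.rec θ₀ (fun _ p =>
      p + (η / (1 + Real.exp ((inner ℝ p (γ₀ • (θs - p)) : ℝ)))) • (γ₀ • (θs - p))) t,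
    rfl, fun t => rfl, ?_, ?_⟩ <;>
  · have key : ∀ t : ℕ, ‖(Nat.rec θ₀ (fun _ p =>
        p + (η / (1 + Real.exp ((inner ℝ p (γ₀ • (θs - p)) : ℝ)))) • (γ₀ • (θs - p))) t :
        EuclideanSpace ℝ (Fin d)) - θs‖ ≤ ρ ^ t * D := by
      intro t
      induction t with
      | zero => simp [hD]
      | succ n ih =>
        have hcontr := aux_contract θs (Nat.rec θ₀ (fun _ p =>
          p + (η / (1 + Real.exp ((inner ℝ p (γ₀ • (θs - p)) : ℝ)))) • (γ₀ • (θs - p))) n)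
          η γ₀ lam hγpos hηγ hη hlam
        rw [← hρ] at hcontr
        calc ‖(Nat.rec θ₀ (fun _ p =>
              p + (η / (1 + Real.exp ((inner ℝ p (γ₀ • (θs - p)) : ℝ)))) • (γ₀ • (θs - p))) (n+1) :
              EuclideanSpace ℝ (Fin d)) - θs‖
            ≤ ρ * ‖(Nat.rec θ₀ (fun _ p =>
              p + (η / (1 + Real.exp ((inner ℝ p (γ₀ • (θs - p)) : ℝ)))) • (γ₀ • (θs - p))) n :
              EuclideanSpace ℝ (Fin d)) - θs‖ := hcontr
          _ ≤ ρ * (ρ ^ n * D) := mul_le_mul_of_nonneg_left ih hρ0.le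
          _ = ρ ^ (n + 1) * D := by ring
    first
    | -- norm bound on the poison points
      (intro t _
       have h2 : ρ ^ t ≤ 1 := pow_le_one₀ hρ0.le hρ1.le
       have h3 := key t
       rw [norm_smul, Real.norm_eq_abs, abs_of_pos hγpos, norm_sub_rev]
       calc γ₀ * ‖_ - θs‖ ≤ γ₀ * (ρ ^ t * D) := mul_le_mul_of_nonneg_left h3 hγpos.le
         _ ≤ γ₀ * D := mul_le_mul_of_nonneg_left (mul_le_of_le_one_left hD0.le h2) hγpos.le
         _ ≤ R := hγD)
    | -- final bound
      (have hlogρ : Real.log ρ < 0 := Real.log_neg hρ0 hρ1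
       have hlogne : Real.log ρ ≠ 0 := ne_of_lt hlogρ
       have hDε1 : 1 < D / ε := (one_lt_div hε).mpr hεD
       have hlogDε : 0 < Real.log (D / ε) := Real.log_pos hDε1
       have hKlog : Real.log (D / ε) ≤ (K : ℝ) * (-Real.log ρ) := by
         have h := mul_le_mul_of_nonneg_right hK (by linarith : (0:ℝ) ≤ -Real.log ρ)
         calc Real.log (D / ε) = C * Real.log (D / ε) * (-Real.log ρ) := by
               rw [hC]; field_simp
           _ ≤ (K : ℝ) * (-Real.log ρ) := h
       have hpow : ρ ^ K ≤ ε / D := by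
         have h1 : (K : ℝ) * Real.log ρ ≤ Real.log (ε / D) := by
           rw [Real.log_div hε.ne' hD0.ne']
           rw [Real.log_div hD0.ne' hε.ne'] at hKlog
           linarith
         calc ρ ^ K = Real.exp ((K : ℝ) * Real.log ρ) := by
               rw [Real.exp_nat_mul, Real.exp_log hρ0]
           _ ≤ Real.exp (Real.log (ε / D)) := Real.exp_le_exp.mpr h1
           _ = ε / D := Real.exp_log (div_pos hε hD0)
       have h3 := key K
       have hfin : ρ ^ K * D ≤ ε := by
         calc ρ ^ K * D ≤ (ε / D) * D := by nlinarith
           _ = ε := by field_simp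
       linarith)
end

section
/- Let d ∈ ℕ, let θ, θ* ∈ ℝ^d, set λ = ‖θ*‖, and let η > 0, γ > 0 satisfy ηγ ≤ 1. Define θ' = θ + η·γ·(θ* − θ)/(1 + exp(γ·⟨θ, θ* − θ⟩)), i.e., the OGD logistic-regression update of θ on the example (γ(θ* − θ), +1). Then ‖θ' − θ*‖ ≤ (1 − ηγ/(1 + exp(λ²γ)))·‖θ − θ*‖. -/
theorem stmt_1 (d : ℕ) (θ θs : EuclideanSpace ℝ (Fin d))
    (lam : ℝ) (hlam : lam = ‖θs‖)
    (η γ : ℝ) (hη : 0 < η) (hγ : 0 < γ) (hηγ : η * γ ≤ 1)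
    (θ' : EuclideanSpace ℝ (Fin d))
    (hθ' : θ' = θ + ((η * γ) /
      (1 + Real.exp (γ * (inner ℝ θ (θs - θ) : ℝ)))) • (θs - θ)) :
    ‖θ' - θs‖ ≤ (1 - η * γ / (1 + Real.exp (lam ^ 2 * γ))) * ‖θ - θs‖ := by
  set a : ℝ := (inner ℝ θ (θs - θ) : ℝ) with ha
  set c : ℝ := η * γ / (1 + Real.exp (γ * a)) with hc
  have hepos : (0:ℝ) < Real.exp (γ * a) := Real.exp_pos _
  have hden : (0:ℝ) < 1 + Real.exp (γ * a) := by linarith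
  have hc0 : 0 < c := div_pos (mul_pos hη hγ) hden
  have hc1 : c ≤ 1 := by
    rw [hc, div_le_one hden]
    linarith
  -- inner bound : a ≤ ‖θs‖^2
  have hinner : a ≤ ‖θs‖ ^ 2 := by
    have h1 : (inner ℝ θ θs : ℝ) ≤ ‖θ‖ * ‖θs‖ := real_inner_le_norm θ θs
    have h2 : (inner ℝ θ (θs - θ) : ℝ) = (inner ℝ θ θs : ℝ) - (inner ℝ θ θ : ℝ) :=
      inner_sub_right θ θs θ
    have h3 : (inner ℝ θ θ : ℝ) = ‖θ‖ ^ 2 := real_inner_self_eq_norm_sq θ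
    rw [ha, h2, h3]
    nlinarith [norm_nonneg θ, norm_nonneg θs]
  -- c' ≤ c
  have hc' : η * γ / (1 + Real.exp (lam ^ 2 * γ)) ≤ c := by
    have hden' : (0:ℝ) < 1 + Real.exp (lam ^ 2 * γ) := by positivity
    apply div_le_div_of_nonneg_left (by positivity) hden
    have : γ * a ≤ lam ^ 2 * γ := by
      rw [hlam]
      nlinarith [hinner, hγ.le]
    linarith [Real.exp_le_exp.mpr this]
  -- θ' - θs = (c - 1) • (θs - θ)
  have hdiff : θ' - θs = (c - 1) • (θs - θ) := by
    rw [hθ']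
    module
  have hnorm : ‖θ' - θs‖ = (1 - c) * ‖θs - θ‖ := by
    rw [hdiff, norm_smul, Real.norm_eq_abs, abs_of_nonpos (by linarith)]
    ring
  rw [hnorm, show ‖θ - θs‖ = ‖θs - θ‖ from norm_sub_rev _ _]
  apply mul_le_mul_of_nonneg_right (by linarith) (norm_nonneg _)
end

section
/- Let d ∈ ℕ, let θ₀, θ* ∈ ℝ^d, set λ = ‖θ*‖, and let η > 0, γ > 0 satisfy ηγ ≤ 1. Define the sequence θ_{t+1} = θ_t + η·γ·(θ* − θ_t)/(1 + exp(γ·⟨θ_t, θ* − θ_t⟩)) and set ρ = 1 − ηγ/(1 + exp(λ²γ)). Then for every K ∈ ℕ, ‖θ_K − θ*‖ ≤ ρ^K·‖θ₀ − θ*‖. -/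
theorem stmt_2 (d : ℕ) (θ₀ θs : EuclideanSpace ℝ (Fin d))
    (lam : ℝ) (hlam : lam = ‖θs‖)
    (η γ : ℝ) (hη : 0 < η) (hγ : 0 < γ) (hηγ : η * γ ≤ 1)
    (θ : ℕ → EuclideanSpace ℝ (Fin d)) (hθ0 : θ 0 = θ₀)
    (hθ : ∀ t, θ (t + 1) = θ t + ((η * γ) /
      (1 + Real.exp (γ * (inner ℝ (θ t) (θs - θ t) : ℝ)))) • (θs - θ t))
    (ρ : ℝ) (hρ : ρ = 1 - η * γ / (1 + Real.exp (lam ^ 2 * γ))) :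
    ∀ K : ℕ, ‖θ K - θs‖ ≤ ρ ^ K * ‖θ₀ - θs‖ := by
  have hE0 : (0:ℝ) < 1 + Real.exp (lam ^ 2 * γ) := by positivity
  have hstep : ∀ t, ‖θ (t + 1) - θs‖ ≤ ρ * ‖θ t - θs‖ := by
    intro t
    set c : ℝ := (η * γ) / (1 + Real.exp (γ * (inner ℝ (θ t) (θs - θ t) : ℝ))) with hc
    have hEt : (0:ℝ) < 1 + Real.exp (γ * (inner ℝ (θ t) (θs - θ t) : ℝ)) := by positivity
    have hinner : (inner ℝ (θ t) (θs - θ t) : ℝ) ≤ lam ^ 2 := by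
      have h1 : (inner ℝ (θ t) (θs - θ t) : ℝ)
          = (inner ℝ (θ t) θs : ℝ) - ‖θ t‖ ^ 2 := by
        rw [inner_sub_right, real_inner_self_eq_norm_sq]
      have h2 : (inner ℝ (θ t) θs : ℝ) ≤ ‖θ t‖ * ‖θs‖ := real_inner_le_norm _ _
      have h3 : (0:ℝ) ≤ ‖θ t‖ := norm_nonneg _
      rw [hlam]
      nlinarith [sq_nonneg (‖θ t‖ - ‖θs‖ / 2)]
    have hExp : Real.exp (γ * (inner ℝ (θ t) (θs - θ t) : ℝ)) ≤ Real.exp (lam ^ 2 * γ) := by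
      apply Real.exp_le_exp.2
      nlinarith
    have hcle : c ≤ 1 := by
      rw [hc]
      rw [div_le_one hEt]
      have := Real.exp_pos (γ * (inner ℝ (θ t) (θs - θ t) : ℝ))
      linarith
    have hclb : η * γ / (1 + Real.exp (lam ^ 2 * γ)) ≤ c := by
      rw [hc]
      apply div_le_div_of_nonneg_left (by positivity) hEt (by linarith)
    have hρc : 1 - c ≤ ρ := by rw [hρ]; linarith
    have hρpos : (0:ℝ) ≤ 1 - c := by linarith
    have heq : θ (t + 1) - θs = (1 - c) • (θ t - θs) := by
      rw [hθ t]
      module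
    rw [heq, norm_smul, Real.norm_eq_abs, abs_of_nonneg hρpos]
    exact mul_le_mul_of_nonneg_right hρc (norm_nonneg _)
  intro K
  induction K with
  | zero => simp [hθ0]
  | succ n ih =>
    have hρnn : (0:ℝ) ≤ ρ := by
      have : η * γ / (1 + Real.exp (lam ^ 2 * γ)) ≤ 1 := by
        rw [div_le_one hE0]
        have := Real.exp_pos (lam ^ 2 * γ)
        linarith
      rw [hρ]; linarith
    calc ‖θ (n + 1) - θs‖ ≤ ρ * ‖θ n - θs‖ := hstep n
      _ ≤ ρ * (ρ ^ n * ‖θ₀ - θs‖) := mul_le_mul_of_nonneg_left ih hρnn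
      _ = ρ ^ (n + 1) * ‖θ₀ - θs‖ := by ring
end

section
/- Let d ∈ ℕ, let θ₀, θ* ∈ ℝ^d with θ₀ ≠ θ*, let R > 0, η > 0, and set γ₀ = min(R/‖θ₀ − θ*‖, 1/η). Define the sequence θ_{t+1} = θ_t + η·γ₀·(θ* − θ_t)/(1 + exp(γ₀·⟨θ_t, θ* − θ_t⟩)). Then for every t ∈ ℕ, ‖θ_t − θ*‖ ≤ ‖θ₀ − θ*‖, and consequently every poisoning example x_t = γ₀·(θ* − θ_t) used by this attack satisfies ‖x_t‖ ≤ R, i.e., lies in the feasible set of the bounded L₂-norm defense with radius R. -/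
theorem stmt_3 (d : ℕ) (θ₀ θs : EuclideanSpace ℝ (Fin d)) (hne : θ₀ ≠ θs)
    (R η : ℝ) (hR : 0 < R) (hη : 0 < η)
    (γ₀ : ℝ) (hγ₀ : γ₀ = min (R / ‖θ₀ - θs‖) (1 / η))
    (θ : ℕ → EuclideanSpace ℝ (Fin d)) (hθ0 : θ 0 = θ₀)
    (hθ : ∀ t, θ (t + 1) = θ t + ((η * γ₀) /
      (1 + Real.exp (γ₀ * (inner ℝ (θ t) (θs - θ t) : ℝ)))) • (θs - θ t)) :
    (∀ t : ℕ, ‖θ t - θs‖ ≤ ‖θ₀ - θs‖) ∧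
    (∀ t : ℕ, ‖γ₀ • (θs - θ t)‖ ≤ R) := by
  have hnorm : (0:ℝ) < ‖θ₀ - θs‖ := by
    rw [norm_pos_iff]; exact sub_ne_zero.mpr hne
  have hγpos : 0 < γ₀ := by
    rw [hγ₀]
    exact lt_min (div_pos hR hnorm) (by positivity)
  have hγη : η * γ₀ ≤ 1 := by
    have : γ₀ ≤ 1 / η := by rw [hγ₀]; exact min_le_right _ _
    calc η * γ₀ ≤ η * (1 / η) := by nlinarith
    _ = 1 := by field_simp
  have key : ∀ t : ℕ, ‖θ t - θs‖ ≤ ‖θ₀ - θs‖ := by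
    intro t
    induction t with
    | zero => rw [hθ0]
    | succ n ih =>
      set c : ℝ := (η * γ₀) / (1 + Real.exp (γ₀ * (inner ℝ (θ n) (θs - θ n) : ℝ))) with hc
      have hexp : (0:ℝ) < Real.exp (γ₀ * (inner ℝ (θ n) (θs - θ n) : ℝ)) := Real.exp_pos _
      have hc0 : 0 ≤ c := by
        apply div_nonneg (by positivity) (by linarith)
      have hc1 : c ≤ 1 := by
        rw [hc, div_le_one (by linarith)]
        nlinarith
      have heq : θ (n + 1) - θs = (1 - c) • (θ n - θs) := by
        rw [hθ n]
        simp only [smul_sub, sub_smul, one_smul]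
        abel
      rw [heq, norm_smul]
      have : ‖(1 - c : ℝ)‖ ≤ 1 := by
        rw [Real.norm_eq_abs, abs_le]; constructor <;> linarith
      calc ‖(1 - c : ℝ)‖ * ‖θ n - θs‖ ≤ 1 * ‖θ n - θs‖ := by
            apply mul_le_mul_of_nonneg_right this (norm_nonneg _)
        _ = ‖θ n - θs‖ := one_mul _
        _ ≤ ‖θ₀ - θs‖ := ih
  refine ⟨key, fun t => ?_⟩
  have hγR : γ₀ * ‖θ₀ - θs‖ ≤ R := by
    have : γ₀ ≤ R / ‖θ₀ - θs‖ := by rw [hγ₀]; exact min_le_left _ _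
    rw [div_eq_mul_inv] at this
    calc γ₀ * ‖θ₀ - θs‖ ≤ R * ‖θ₀ - θs‖⁻¹ * ‖θ₀ - θs‖ := by nlinarith
      _ = R := by field_simp
  rw [norm_smul, Real.norm_eq_abs, abs_of_pos hγpos]
  have : ‖θs - θ t‖ = ‖θ t - θs‖ := norm_sub_rev _ _
  rw [this]
  calc γ₀ * ‖θ t - θs‖ ≤ γ₀ * ‖θ₀ - θs‖ := by nlinarith [key t]
    _ ≤ R := hγR
end

section
/- Let d ∈ ℕ, let F ⊆ ℝ^d, let θ₀, θ* ∈ ℝ^d with θ₀ ≠ θ*, set u = θ* − θ₀, and suppose there is r > 0 such that the line segment {c·u/‖u‖ : 0 < c ≤ r} is contained in F. Let η > 0. Then there exists a constant C > 0 such that for every ε with 0 < ε < ‖θ₀ − θ*‖ and every natural number K with K ≥ C·log(‖θ₀ − θ*‖/ε), there exist x_0, …, x_{K−1} ∈ F such that the OGD iterates θ_{t+1} = θ_t + η·x_t/(1 + exp(⟨θ_t, x_t⟩)) started from θ₀ satisfy ‖θ_K − θ*‖ ≤ ε. (This is part 1 of Theorem 2: if the one-sided feasible set contains a line segment from the origin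 in the direction θ* − θ₀, the attack is rapid.) -/
theorem stmt_4 (d : ℕ) (F : Set (EuclideanSpace ℝ (Fin d)))
    (θ₀ θs : EuclideanSpace ℝ (Fin d)) (hne : θ₀ ≠ θs)
    (u : EuclideanSpace ℝ (Fin d)) (hu : u = θs - θ₀)
    (r : ℝ) (hr : 0 < r)
    (hseg : ∀ c : ℝ, 0 < c → c ≤ r → (c / ‖u‖) • u ∈ F)
    (η : ℝ) (hη : 0 < η) :
    ∃ C : ℝ, 0 < C ∧
      ∀ ε : ℝ, 0 < ε → ε < ‖θ₀ - θs‖ →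
        ∀ K : ℕ, C * Real.log (‖θ₀ - θs‖ / ε) ≤ K →
          ∃ x θ : ℕ → EuclideanSpace ℝ (Fin d),
            (∀ t < K, x t ∈ F) ∧
            θ 0 = θ₀ ∧
            (∀ t, θ (t + 1)
              = θ t + (η / (1 + Real.exp ((inner ℝ (θ t) (x t) : ℝ)))) • x t) ∧
            ‖θ K - θs‖ ≤ ε := by
  classical
  have hune : u ≠ 0 := by
    rw [hu, sub_ne_zero]; exact Ne.symm hne
  set n : ℝ := ‖u‖ with hn
  have hupos : 0 < n := norm_pos_iff.mpr hune
  have hnorm : ‖θ₀ - θs‖ = n := by rw [hn, hu, norm_sub_rev]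
  set A : ℝ := (inner ℝ θ₀ u : ℝ) / n + n with hA
  set δ : ℝ := η * r / (1 + Real.exp (r * A)) with hδdef
  have hδ : 0 < δ := by
    have := Real.exp_pos (r * A)
    positivity
  set ρ : ℝ := max (1/2) (1 - δ / n) with hρdef
  have hρ0 : 0 < ρ := lt_of_lt_of_le (by norm_num) (le_max_left _ _)
  have hρ1 : ρ < 1 := by
    apply max_lt (by norm_num)
    have : 0 < δ / n := div_pos hδ hupos
    linarith
  have hstep : (1 - ρ) * n ≤ δ := by
    have h1 : 1 - δ / n ≤ ρ := le_max_right _ _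
    have h2 : (1 - ρ) ≤ δ / n := by linarith
    calc (1 - ρ) * n ≤ (δ / n) * n := by nlinarith
    _ = δ := by field_simp
  have hlog : Real.log ρ < 0 := Real.log_neg hρ0 hρ1
  have hnlog : 0 < -Real.log ρ := by linarith
  refine ⟨1 / (-Real.log ρ), by positivity, ?_⟩
  intro ε hε hεlt K hK
  rw [hnorm] at hεlt hK
  -- choose the scalar inputs c t via IVT
  have hex : ∀ t : ℕ, ∃ c : ℝ, c ∈ Set.Ioc (0:ℝ) r ∧
      η * c / (1 + Real.exp (c * (((inner ℝ θ₀ u : ℝ) + (1 - ρ^t) * n^2) / n)))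
        = (1 - ρ) * ρ^t * n := by
    intro t
    set a : ℝ := ((inner ℝ θ₀ u : ℝ) + (1 - ρ^t) * n^2) / n with ha
    set f : ℝ → ℝ := fun x => η * x / (1 + Real.exp (x * a)) with hf
    have hcont : Continuous f := by
      apply Continuous.div
      · exact continuous_const.mul continuous_id
      · exact continuous_const.add (Real.continuous_exp.comp (continuous_id.mul continuous_const))
      · intro x
        have := Real.exp_pos (x * a)
        positivity
    have hρt1 : ρ ^ t ≤ 1 := pow_le_one₀ hρ0.le hρ1.le
    have hρtpos : 0 < ρ ^ t := pow_pos hρ0 t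
    have haA : a ≤ A := by
      have h1 : a = (inner ℝ θ₀ u : ℝ) / n + (1 - ρ^t) * n := by
        rw [ha]; field_simp
      rw [h1, hA]
      nlinarith [mul_pos hρtpos hupos]
    have hfr : δ ≤ f r := by
      rw [hf, hδdef]
      have hexp : Real.exp (r * a) ≤ Real.exp (r * A) :=
        Real.exp_le_exp.mpr (mul_le_mul_of_nonneg_left haA hr.le)
      have h1 : 0 < 1 + Real.exp (r * a) := by positivity
      apply div_le_div_of_nonneg_left (by positivity) h1 (by linarith)
    have hmem : (1 - ρ) * ρ^t * n ∈ Set.Ioc (f 0) (f r) := by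
      constructor
      · have : f 0 = 0 := by simp [hf]
        rw [this]
        have : 0 < 1 - ρ := by linarith
        positivity
      · calc (1 - ρ) * ρ^t * n ≤ (1 - ρ) * 1 * n := by
              nlinarith [mul_nonneg (mul_nonneg (sub_nonneg.mpr hρ1.le)
                (sub_nonneg.mpr hρt1)) hupos.le]
        _ = (1 - ρ) * n := by ring
        _ ≤ δ := hstep
        _ ≤ f r := hfr
    have := intermediate_value_Ioc hr.le hcont.continuousOn hmem
    obtain ⟨c, hc, hfc⟩ := this
    exact ⟨c, hc, hfc⟩
  choose c hc hfc using hex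
  refine ⟨fun t => (c t / n) • u, fun t => θ₀ + (1 - ρ^t) • u, ?_, ?_, ?_, ?_⟩
  · intro t _
    exact hseg (c t) (hc t).1 (hc t).2
  · simp
  · intro t
    have hinner : (inner ℝ (θ₀ + (1 - ρ^t) • u) ((c t / n) • u) : ℝ)
        = c t * (((inner ℝ θ₀ u : ℝ) + (1 - ρ^t) * n^2) / n) := by
      rw [real_inner_smul_right, inner_add_left, real_inner_smul_left,
        real_inner_self_eq_norm_sq]
      rw [← hn]
      field_simp
    rw [hinner, smul_smul]
    have hcoef : η / (1 + Real.exp (c t * (((inner ℝ θ₀ u : ℝ) + (1 - ρ^t) * n^2) / n)))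
        * (c t / n) = (1 - ρ) * ρ^t := by
      have h := hfc t
      have hden : (0:ℝ) < 1 + Real.exp (c t * (((inner ℝ θ₀ u : ℝ) + (1 - ρ^t) * n^2) / n)) := by
        positivity
      field_simp at h ⊢
      linarith [h]
    rw [hcoef]
    show θ₀ + (1 - ρ^(t+1)) • u = θ₀ + (1 - ρ^t) • u + ((1 - ρ) * ρ^t) • u
    have h2 : (1 : ℝ) - ρ^(t+1) = (1 - ρ^t) + (1 - ρ) * ρ^t := by ring
    rw [h2, add_smul, add_assoc]
  · show ‖θ₀ + (1 - ρ^K) • u - θs‖ ≤ ε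
    have hθs : θs = θ₀ + u := by rw [hu]; abel
    have hKnorm : ‖θ₀ + (1 - ρ^K) • u - θs‖ = ρ^K * n := by
      rw [hθs]
      have : θ₀ + (1 - ρ^K) • u - (θ₀ + u) = (-(ρ^K)) • u := by
        rw [neg_smul]
        have : (1 - ρ^K) • u = u - (ρ^K) • u := by
          rw [sub_smul, one_smul]
        rw [this]; abel
      rw [this, norm_smul, Real.norm_eq_abs, abs_neg,
        abs_of_pos (pow_pos hρ0 K), ← hn]
    rw [hKnorm]
    -- show ρ^K * n ≤ ε
    have hKlog : Real.log (n / ε) ≤ K * (-Real.log ρ) := by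
      rw [div_mul_eq_mul_div, div_le_iff₀ hnlog] at hK
      linarith [hK]
    have hρKpos : 0 < ρ ^ K := pow_pos hρ0 K
    have hlogpow : Real.log (ρ ^ K) = K * Real.log ρ := by rw [Real.log_pow]
    have hle : Real.log (ρ ^ K) ≤ Real.log (ε / n) := by
      have : Real.log (ε / n) = -Real.log (n / ε) := by
        rw [← Real.log_inv]
        congr 1
        field_simp
      rw [this, hlogpow]
      linarith [hKlog]
    have : ρ ^ K ≤ ε / n := by
      have h1 := Real.exp_le_exp.mpr hle
      rwa [Real.exp_log hρKpos, Real.exp_log (by positivity)] at h1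
    calc ρ^K * n ≤ (ε / n) * n := mul_le_mul_of_nonneg_right this hupos.le
    _ = ε := div_mul_cancel₀ ε hupos.ne'
end

section
/- Let d ∈ ℕ, let F ⊆ ℝ^d, and suppose there exists a convex set G ⊆ ℝ^d with F ⊆ G. Let θ₀, θ* ∈ ℝ^d with θ* ≠ θ₀, and suppose that r·(θ* − θ₀) ∉ G for every real r > 0. Then for every η > 0, every K ∈ ℕ, and every finite sequence x_0, …, x_{K−1} with each x_t ∈ F, the OGD iterates θ_{t+1} = θ_t + η·x_t/(1 + exp(⟨θ_t, x_t⟩)) started from θ₀ satisfy θ_K ≠ θ*. (This is part 2 of Theorem 2: no data poisoner restricted to F can output the target θ*.) -/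
theorem stmt_5 (d : ℕ) (F G : Set (EuclideanSpace ℝ (Fin d)))
    (hFG : F ⊆ G) (hG : Convex ℝ G)
    (θ₀ θs : EuclideanSpace ℝ (Fin d)) (hne : θs ≠ θ₀)
    (hray : ∀ r : ℝ, 0 < r → r • (θs - θ₀) ∉ G) :
    ∀ η : ℝ, 0 < η → ∀ K : ℕ,
      ∀ x θ : ℕ → EuclideanSpace ℝ (Fin d),
        (∀ t < K, x t ∈ F) →
        θ 0 = θ₀ →
        (∀ t, θ (t + 1)
          = θ t + (η / (1 + Real.exp ((inner ℝ (θ t) (x t) : ℝ)))) • x t) →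
        θ K ≠ θs := by
  intro η hη K x θ hx h0 hrec hK
  set c : ℕ → ℝ := fun t => η / (1 + Real.exp ((inner ℝ (θ t) (x t) : ℝ))) with hc
  have hcpos : ∀ t, 0 < c t := by
    intro t
    apply div_pos hη
    positivity
  have hrec' : ∀ t, θ (t + 1) = θ t + c t • x t := hrec
  have hsum : ∀ n, θ n = θ₀ + ∑ t ∈ Finset.range n, c t • x t := by
    intro n
    induction n with
    | zero => simpa using h0
    | succ n ih =>
      rw [hrec' n, ih, Finset.sum_range_succ, add_assoc]
  rcases Nat.eq_zero_or_pos K with h | hKpos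
  · subst h
    exact hne (hK.symm.trans h0)
  · have hSpos : 0 < ∑ t ∈ Finset.range K, c t :=
      Finset.sum_pos (fun t _ => hcpos t) (by simpa using hKpos.ne')
    set S := ∑ t ∈ Finset.range K, c t with hS
    apply hray (1 / S) (one_div_pos.mpr hSpos)
    have hdiff : θs - θ₀ = ∑ t ∈ Finset.range K, c t • x t := by
      rw [← hK, hsum K]; abel
    have : (1 / S) • (θs - θ₀) = ∑ t ∈ Finset.range K, (c t / S) • x t := by
      rw [hdiff, Finset.smul_sum]
      refine Finset.sum_congr rfl fun t _ => ?_
      rw [smul_smul]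
      ring_nf
    rw [this]
    exact hG.sum_mem (fun t _ => le_of_lt (div_pos (hcpos t) hSpos))
      (by rw [← Finset.sum_div, div_self hSpos.ne'])
      (fun t ht => hFG (hx t (Finset.mem_range.mp ht)))
end

section
/- Let d ∈ ℕ, let θ₀, θ* ∈ ℝ^d, let η > 0, and let (γ_t)_{t ∈ ℕ} be positive reals with η·γ_t ≤ 1 for every t. Define the sequence θ_{t+1} = θ_t + η·γ_t·(θ* − θ_t)/(1 + exp(γ_t·⟨θ_t, θ* − θ_t⟩)). Then for every t ∈ ℕ there exists a scalar c_t ∈ [0, 1] such that θ_t − θ* = c_t·(θ₀ − θ*); that is, all iterates remain on the segment between θ₀ and θ*. -/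
theorem stmt_7 (d : ℕ) (θ₀ θs : EuclideanSpace ℝ (Fin d))
    (η : ℝ) (hη : 0 < η) (γ : ℕ → ℝ) (hγ : ∀ t, 0 < γ t)
    (hηγ : ∀ t, η * γ t ≤ 1)
    (θ : ℕ → EuclideanSpace ℝ (Fin d)) (hθ0 : θ 0 = θ₀)
    (hθ : ∀ t, θ (t + 1) = θ t + ((η * γ t) /
      (1 + Real.exp (γ t * (inner ℝ (θ t) (θs - θ t) : ℝ)))) • (θs - θ t)) :
    ∀ t : ℕ, ∃ c : ℝ, c ∈ Set.Icc (0 : ℝ) 1 ∧ θ t - θs = c • (θ₀ - θs) := by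
  intro t
  induction t with
  | zero => exact ⟨1, ⟨zero_le_one, le_refl 1⟩, by simp [hθ0]⟩
  | succ t ih =>
    obtain ⟨c, ⟨hc0, hc1⟩, hc⟩ := ih
    set α : ℝ := (η * γ t) / (1 + Real.exp (γ t * (inner ℝ (θ t) (θs - θ t) : ℝ))) with hα
    have hexp : (0 : ℝ) < 1 + Real.exp (γ t * (inner ℝ (θ t) (θs - θ t) : ℝ)) := by
      positivity
    have hα0 : 0 ≤ α := by
      apply div_nonneg (le_of_lt (mul_pos hη (hγ t))) hexp.le
    have hα1 : α ≤ 1 := by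
      rw [hα, div_le_one hexp]
      have : (1 : ℝ) ≤ 1 + Real.exp (γ t * (inner ℝ (θ t) (θs - θ t) : ℝ)) := by
        have := Real.exp_pos (γ t * (inner ℝ (θ t) (θs - θ t) : ℝ))
        linarith
      linarith [hηγ t]
    refine ⟨(1 - α) * c, ⟨mul_nonneg (by linarith) hc0,
      by nlinarith⟩, ?_⟩
    have h := hθ t
    rw [h]
    have : θ t + α • (θs - θ t) - θs = (1 - α) • (θ t - θs) := by
      rw [sub_smul, one_smul, smul_sub, smul_sub]
      abel
    rw [this, hc, smul_smul]
end

section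
/- Let d ∈ ℕ, let μ₊, μ₋ ∈ ℝ^d, let τ ∈ ℝ with τ > min(‖μ₊‖, ‖μ₋‖), let R > 0, and let θ₀, θ* ∈ ℝ^d with θ₀ ≠ θ*, η > 0. Define the one-sided feasible set F = {x ∈ ℝ^d : ‖x − μ₊‖ ≤ τ and ‖x‖ ≤ R} ∪ {x ∈ ℝ^d : ‖x + μ₋‖ ≤ τ and ‖x‖ ≤ R}. Then there exists a constant C > 0 such that for every ε with 0 < ε < ‖θ₀ − θ*‖ and every natural number K with K ≥ C·log(‖θ₀ − θ*‖/ε), there exist x_0, …, x_{K−1} ∈ F such that the OGD iterates θ_{t+1} = θ_t + η·x_t/(1 + exp(⟨θ_t, x_t⟩)) started from θ₀ satisfy ‖θ_K − θ*‖ ≤ ε. (This is part 1 of the lemma on the L₂-distance-to-centroid defense: if τ > min(‖μ₊‖, ‖μ₋‖), a rapid attack exists.) -/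
theorem stmt_9 (d : ℕ) (μp μm : EuclideanSpace ℝ (Fin d)) (τ : ℝ)
    (hτ : min ‖μp‖ ‖μm‖ < τ) (R : ℝ) (hR : 0 < R)
    (θ₀ θs : EuclideanSpace ℝ (Fin d)) (hne : θ₀ ≠ θs)
    (η : ℝ) (hη : 0 < η)
    (F : Set (EuclideanSpace ℝ (Fin d)))
    (hF : F = {x | ‖x - μp‖ ≤ τ ∧ ‖x‖ ≤ R} ∪ {x | ‖x + μm‖ ≤ τ ∧ ‖x‖ ≤ R}) :
    ∃ C : ℝ, 0 < C ∧
      ∀ ε : ℝ, 0 < ε → ε < ‖θ₀ - θs‖ →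
        ∀ K : ℕ, C * Real.log (‖θ₀ - θs‖ / ε) ≤ K →
          ∃ x θ : ℕ → EuclideanSpace ℝ (Fin d),
            (∀ t < K, x t ∈ F) ∧
            θ 0 = θ₀ ∧
            (∀ t, θ (t + 1)
              = θ t + (η / (1 + Real.exp ((inner ℝ (θ t) (x t) : ℝ)))) • x t) ∧
            ‖θ K - θs‖ ≤ ε := by
  classical
  set D := ‖θ₀ - θs‖ with hD
  have hD0 : 0 < D := norm_pos_iff.mpr (sub_ne_zero_of_ne hne)
  set a := min ‖μp‖ ‖μm‖ with ha
  set r := min (τ - a) R with hr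
  have hr0 : 0 < r := lt_min (by linarith) hR
  have hball : ∀ y : EuclideanSpace ℝ (Fin d), ‖y‖ ≤ r → y ∈ F := by
    intro y hy
    have hyR : ‖y‖ ≤ R := hy.trans (min_le_right _ _)
    have hyτ : ‖y‖ ≤ τ - a := hy.trans (min_le_left _ _)
    rcases min_cases ‖μp‖ ‖μm‖ with ⟨h1, _⟩ | ⟨h1, _⟩
    · rw [hF]; left
      refine ⟨?_, hyR⟩
      calc ‖y - μp‖ ≤ ‖y‖ + ‖μp‖ := norm_sub_le _ _
        _ ≤ τ := by rw [ha, h1] at hyτ; linarith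
    · rw [hF]; right
      refine ⟨?_, hyR⟩
      calc ‖y + μm‖ ≤ ‖y‖ + ‖μm‖ := norm_add_le _ _
        _ ≤ τ := by rw [ha, h1] at hyτ; linarith
  set M := ‖θs‖ + D with hM
  set δ := η * r / (1 + Real.exp (r * M)) with hδ
  have hδ0 : 0 < δ := by
    apply div_pos (mul_pos hη hr0)
    positivity
  set β := min (1/2 : ℝ) (δ / D) with hβ
  have hβ0 : 0 < β := lt_min (by norm_num) (div_pos hδ0 hD0)
  have hβ2 : β ≤ 1/2 := min_le_left _ _
  set q := 1 - β with hq
  have hq0 : 0 < q := by rw [hq]; linarith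
  have hq1 : q < 1 := by rw [hq]; linarith
  -- step lemma
  have step : ∀ θ : EuclideanSpace ℝ (Fin d), ∃ x, x ∈ F ∧
      (‖θ - θs‖ ≤ D →
        (θ + (η / (1 + Real.exp ((inner ℝ θ x : ℝ)))) • x) - θs = q • (θ - θs)) := by
    intro θ
    by_cases hb : ‖θ - θs‖ ≤ D
    · by_cases hθ : θ = θs
      · refine ⟨0, hball 0 (by simp [hr0.le]), fun _ => ?_⟩
        simp [hθ]
      · have hDt0 : 0 < ‖θ - θs‖ := norm_pos_iff.mpr (sub_ne_zero_of_ne hθ)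
        set Dt := ‖θ - θs‖ with hDt
        set u : EuclideanSpace ℝ (Fin d) := Dt⁻¹ • (θs - θ) with hu
        have hu1 : ‖u‖ = 1 := by
          rw [hu, norm_smul, norm_sub_rev]
          rw [Real.norm_eq_abs, abs_inv, abs_of_pos hDt0]
          field_simp
          exact hDt.symm
        set ip := (inner ℝ θ u : ℝ) with hip
        have hipM : ip ≤ M := by
          have h1 : ip ≤ ‖θ‖ * ‖u‖ := real_inner_le_norm θ u
          have h2 : ‖θ‖ ≤ ‖θs‖ + Dt := by
            calc ‖θ‖ = ‖θs + (θ - θs)‖ := by congr 1; abel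
              _ ≤ ‖θs‖ + ‖θ - θs‖ := norm_add_le _ _
          rw [hu1, mul_one] at h1
          rw [hM]; linarith
        set f : ℝ → ℝ := fun s => η * s / (1 + Real.exp (s * ip)) with hf
        have hfc : ContinuousOn f (Set.Icc 0 r) := by
          apply Continuous.continuousOn
          apply Continuous.div
          · exact continuous_const.mul continuous_id
          · exact continuous_const.add ((continuous_id.mul continuous_const).rexp)
          · intro s; positivity
        have hf0 : f 0 = 0 := by simp [hf]
        have htle : β * Dt ≤ f r := by
          have h1 : β * Dt ≤ δ := by
            calc β * Dt ≤ (δ / D) * D := by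
                  apply mul_le_mul (min_le_right _ _) hb hDt0.le
                  exact (div_pos hδ0 hD0).le
              _ = δ := by field_simp
          refine h1.trans ?_
          rw [hf, hδ]
          apply div_le_div_of_nonneg_left (mul_pos hη hr0).le (by positivity)
          have : r * ip ≤ r * M := mul_le_mul_of_nonneg_left hipM hr0.le
          have := Real.exp_le_exp.mpr this
          linarith
        have hmem : β * Dt ∈ Set.Icc (f 0) (f r) := by
          constructor
          · rw [hf0]; positivity
          · exact htle
        obtain ⟨s, hs, hfs⟩ := intermediate_value_Icc hr0.le hfc hmem
        refine ⟨s • u, ?_, fun _ => ?_⟩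
        · apply hball
          rw [norm_smul, hu1, mul_one, Real.norm_eq_abs, abs_of_nonneg hs.1]
          exact hs.2
        · have hinn : (inner ℝ θ (s • u) : ℝ) = s * ip := by
            rw [real_inner_smul_right]
          rw [hinn]
          have hcx : (η / (1 + Real.exp (s * ip))) • (s • u)
              = (β * Dt) • u := by
            rw [smul_smul]
            congr 1
            rw [← hfs, hf]
            field_simp
          rw [hcx, hu, smul_smul]
          have : β * Dt * Dt⁻¹ = β := by field_simp
          rw [this]
          rw [hq]
          module
    · refine ⟨0, hball 0 (by simp [hr0.le]), fun h => absurd h hb⟩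
  -- sequences
  set xf : EuclideanSpace ℝ (Fin d) → EuclideanSpace ℝ (Fin d) :=
    fun θ => Classical.choose (step θ) with hxf
  set θseq : ℕ → EuclideanSpace ℝ (Fin d) :=
    fun t => Nat.rec θ₀
      (fun _ th => th + (η / (1 + Real.exp ((inner ℝ th (xf th) : ℝ)))) • (xf th)) t
    with hθseq
  have hrec : ∀ t, θseq (t + 1)
      = θseq t + (η / (1 + Real.exp ((inner ℝ (θseq t) (xf (θseq t)) : ℝ)))) • (xf (θseq t)) :=
    fun t => rfl
  have hkey : ∀ t, θseq t - θs = q ^ t • (θ₀ - θs) := by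
    intro t
    induction t with
    | zero => simp [hθseq]
    | succ n ih =>
      have hb : ‖θseq n - θs‖ ≤ D := by
        rw [ih, norm_smul, Real.norm_eq_abs, abs_of_pos (pow_pos hq0 n)]
        calc q ^ n * D ≤ 1 * D := by
              apply mul_le_mul_of_nonneg_right _ hD0.le
              exact pow_le_one₀ hq0.le hq1.le
          _ = D := one_mul D
      have := (Classical.choose_spec (step (θseq n))).2 hb
      rw [hrec n, this, ih, smul_smul, pow_succ]
      ring_nf
  -- constant
  set L := Real.log (1 / q) with hL
  have hL0 : 0 < L := Real.log_pos (one_lt_one_div hq0 hq1)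
  refine ⟨L⁻¹, inv_pos.mpr hL0, ?_⟩
  intro ε hε0 hεD K hK
  refine ⟨fun t => xf (θseq t), θseq, fun t _ => (Classical.choose_spec (step (θseq t))).1,
    rfl, hrec, ?_⟩
  have hqK : q ^ K ≤ ε / D := by
    have h1 : Real.log (D / ε) ≤ K * L := by
      rw [inv_mul_le_iff₀ hL0] at hK
      linarith [hK]
    have h2 : (K : ℝ) * Real.log q ≤ Real.log (ε / D) := by
      rw [hL, Real.log_div one_ne_zero hq0.ne', Real.log_one] at h1
      rw [Real.log_div hε0.ne' hD0.ne']
      rw [Real.log_div hD0.ne' hε0.ne'] at h1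
      nlinarith
    calc q ^ K = Real.exp ((K : ℝ) * Real.log q) := by
          rw [Real.exp_nat_mul, Real.exp_log hq0]
      _ ≤ Real.exp (Real.log (ε / D)) := Real.exp_le_exp.mpr h2
      _ = ε / D := Real.exp_log (div_pos hε0 hD0)
  rw [hkey K, norm_smul, Real.norm_eq_abs, abs_of_pos (pow_pos hq0 K)]
  calc q ^ K * D ≤ (ε / D) * D := mul_le_mul_of_nonneg_right hqK hD0.le
    _ = ε := by field_simp
end

section
/- Let d ∈ ℕ, let μ₊, μ₋, θ₀, θ* ∈ ℝ^d with θ₀ ≠ θ*, and set u = θ* − θ₀. Suppose ⟨μ₊, u⟩ < 0 and ⟨μ₋, −u⟩ < 0, and suppose τ ∈ ℝ satisfies τ ≤ min(−⟨μ₊, u⟩/‖u‖, ⟨μ₋, u⟩/‖u‖). Define the one-sided feasible set F = {x ∈ ℝ^d : ‖x − μ₊‖ ≤ τ} ∪ {x ∈ ℝ^d : ‖x + μ₋‖ ≤ τ}. Then for every η > 0, every K ∈ ℕ, and every finite sequence x_0, …, x_{K−1} with each x_t ∈ F, the OGD iterates θ_{t+1} = θ_t + η·x_t/(1 + exp(⟨θ_t,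 x_t⟩)) started from θ₀ satisfy θ_K ≠ θ*. (This is part 2 of the lemma on the L₂-distance-to-centroid defense: no data poisoner can output θ*.) -/
theorem stmt_11 (d : ℕ) (μp μm θ₀ θs : EuclideanSpace ℝ (Fin d))
    (hne : θ₀ ≠ θs) (u : EuclideanSpace ℝ (Fin d)) (hu : u = θs - θ₀)
    (hμp : (inner ℝ μp u : ℝ) < 0) (hμm : (inner ℝ μm (-u) : ℝ) < 0)
    (τ : ℝ) (hτ : τ ≤ min (-(inner ℝ μp u : ℝ) / ‖u‖) ((inner ℝ μm u : ℝ) / ‖u‖))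
    (F : Set (EuclideanSpace ℝ (Fin d)))
    (hF : F = {x | ‖x - μp‖ ≤ τ} ∪ {x | ‖x + μm‖ ≤ τ}) :
    ∀ η : ℝ, 0 < η → ∀ K : ℕ,
      ∀ x θ : ℕ → EuclideanSpace ℝ (Fin d),
        (∀ t < K, x t ∈ F) →
        θ 0 = θ₀ →
        (∀ t, θ (t + 1)
          = θ t + (η / (1 + Real.exp ((inner ℝ (θ t) (x t) : ℝ)))) • x t) →
        θ K ≠ θs := by
  intro η hη K x θ hx h0 hstep
  have hune : u ≠ 0 := by
    rw [hu, sub_ne_zero]; exact fun h => hne h.symm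
  have hupos : (0:ℝ) < ‖u‖ := norm_pos_iff.mpr hune
  -- every feasible point has nonpositive inner product with u
  have hkey : ∀ y ∈ F, (inner ℝ y u : ℝ) ≤ 0 := by
    intro y hy
    rw [hF] at hy
    rcases hy with hy | hy
    · have h1 : (inner ℝ (y - μp) u : ℝ) ≤ τ * ‖u‖ := by
        calc (inner ℝ (y - μp) u : ℝ) ≤ ‖y - μp‖ * ‖u‖ := real_inner_le_norm _ _
        _ ≤ τ * ‖u‖ := by
            exact mul_le_mul_of_nonneg_right hy hupos.le
      have h2 : τ * ‖u‖ ≤ -(inner ℝ μp u : ℝ) := by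
        have := le_trans hτ (min_le_left _ _)
        calc τ * ‖u‖ ≤ (-(inner ℝ μp u : ℝ) / ‖u‖) * ‖u‖ :=
              mul_le_mul_of_nonneg_right this hupos.le
        _ = -(inner ℝ μp u : ℝ) := div_mul_cancel₀ _ hupos.ne'
      have h3 : (inner ℝ (y - μp) u : ℝ) = (inner ℝ y u : ℝ) - (inner ℝ μp u : ℝ) :=
        inner_sub_left _ _ _
      linarith [h1, h2, h3.symm.le, h3.le]
    · have h1 : (inner ℝ (y + μm) u : ℝ) ≤ τ * ‖u‖ := by
        calc (inner ℝ (y + μm) u : ℝ) ≤ ‖y + μm‖ * ‖u‖ := real_inner_le_norm _ _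
        _ ≤ τ * ‖u‖ := mul_le_mul_of_nonneg_right hy hupos.le
      have h2 : τ * ‖u‖ ≤ (inner ℝ μm u : ℝ) := by
        have := le_trans hτ (min_le_right _ _)
        calc τ * ‖u‖ ≤ ((inner ℝ μm u : ℝ) / ‖u‖) * ‖u‖ :=
              mul_le_mul_of_nonneg_right this hupos.le
        _ = (inner ℝ μm u : ℝ) := div_mul_cancel₀ _ hupos.ne'
      have h3 : (inner ℝ (y + μm) u : ℝ) = (inner ℝ y u : ℝ) + (inner ℝ μm u : ℝ) :=
        inner_add_left _ _ _
      linarith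
  -- inner product decreases along iterates
  have hmono : ∀ k ≤ K, (inner ℝ (θ k) u : ℝ) ≤ (inner ℝ θ₀ u : ℝ) := by
    intro k hk
    induction k with
    | zero => rw [h0]
    | succ n ih =>
      have hn : n ≤ K := Nat.le_of_succ_le hk
      have hnK : n < K := hk
      have hxF := hkey (x n) (hx n hnK)
      have hc : 0 < η / (1 + Real.exp ((inner ℝ (θ n) (x n) : ℝ))) := by
        apply div_pos hη
        positivity
      have : (inner ℝ (θ (n+1)) u : ℝ)
          = (inner ℝ (θ n) u : ℝ)
            + (η / (1 + Real.exp ((inner ℝ (θ n) (x n) : ℝ)))) * (inner ℝ (x n) u : ℝ) := by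
        rw [hstep n, inner_add_left, real_inner_smul_left]
      have hle : (η / (1 + Real.exp ((inner ℝ (θ n) (x n) : ℝ)))) * (inner ℝ (x n) u : ℝ) ≤ 0 :=
        mul_nonpos_of_nonneg_of_nonpos hc.le hxF
      have := ih hn
      linarith
  intro hKeq
  have h1 := hmono K le_rfl
  rw [hKeq] at h1
  have h2 : (inner ℝ θs u : ℝ) - (inner ℝ θ₀ u : ℝ) = ‖u‖^2 := by
    rw [← inner_sub_left, ← hu, real_inner_self_eq_norm_sq]
  nlinarith [hupos]
end

section
/- Let T ∈ ℕ and let x_0, …, x_{T−1} be real numbers each equal to 1 or −1 (in one-sided form, x_t = 1 is a clean example and x_t = −1 is a poisoning example). Define θ_0 = 0 and θ_{t+1} = θ_t + x_t/(1 + exp(θ_t·x_t)). Then the number of indices t < T with x_t = 1 and θ_t ≤ 0 (clean examples misclassified by the current model) is at most the number of indices t < T with x_t = −1, plus 1. (This is the fully-online hard case: the attacker cannot cause more clean classification errors than the number of poisoning points it injects, up to one corner case.) -/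
private lemma aux_half_le (a : ℝ) (h : a ≤ 0) : (1:ℝ)/2 ≤ 1/(1+Real.exp a) := by
  have h1 : Real.exp a ≤ 1 := Real.exp_le_one_iff.2 h
  have h2 : (0:ℝ) < 1 + Real.exp a := by positivity
  rw [div_le_div_iff₀ (by norm_num) h2]
  nlinarith

private lemma aux_le_half (a : ℝ) (h : 0 ≤ a) : 1/(1+Real.exp a) ≤ (1:ℝ)/2 := by
  have h1 : (1:ℝ) ≤ Real.exp a := Real.one_le_exp h
  have h2 : (0:ℝ) < 1 + Real.exp a := by positivity
  rw [div_le_div_iff₀ h2 (by norm_num)]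
  nlinarith

private lemma aux_lt_one (a : ℝ) : 1/(1+Real.exp a) < 1 := by
  have h1 : (0:ℝ) < Real.exp a := Real.exp_pos a
  rw [div_lt_one (by positivity)]; linarith

private lemma aux_gt_zero (a : ℝ) : 0 < 1/(1+Real.exp a) := by positivity

private lemma key1 (a : ℝ) (h1 : -(1/2) < a) (h2 : a ≤ 0) :
    0 < a + 1/(1+Real.exp a) := by
  have he : Real.exp a ≤ 1 := Real.exp_le_one_iff.2 h2
  have hp := Real.exp_pos a
  have h3 : (0:ℝ) < 1 + Real.exp a := by positivity
  have : -a < 1/(1+Real.exp a) := by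
    rw [lt_div_iff₀ h3]
    nlinarith
  linarith

private lemma key2 (a : ℝ) (h1 : 0 < a) : -(1/2) < a - 1/(1+Real.exp (-a)) := by
  have hp := Real.exp_pos (-a)
  rcases le_or_gt 1 a with h | h
  · have := aux_lt_one (-a)
    linarith
  · have hu : 1 - a ≤ Real.exp (-a) := by
      have := Real.add_one_le_exp (-a); linarith
    have : 1/(1+Real.exp (-a)) < a + 1/2 := by
      rw [div_lt_iff₀ (by positivity)]
      nlinarith
    linarith

open Classical in
theorem stmt_14 (T : ℕ) (x : ℕ → ℝ) (hx : ∀ t < T, x t = 1 ∨ x t = -1)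
    (θ : ℕ → ℝ) (hθ0 : θ 0 = 0)
    (hθ : ∀ t, θ (t + 1) = θ t + x t / (1 + Real.exp (θ t * x t))) :
    ((Finset.range T).filter (fun t => x t = 1 ∧ θ t ≤ 0)).card ≤
      ((Finset.range T).filter (fun t => x t = -1)).card + 1 := by
  suffices h : ∀ n, n ≤ T →
      ((((Finset.range n).filter (fun t => x t = 1 ∧ θ t ≤ 0)).card : ℤ) -
        ((Finset.range n).filter (fun t => x t = -1)).card ≤ 1) ∧
      (((((Finset.range n).filter (fun t => x t = 1 ∧ θ t ≤ 0)).card : ℝ) -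
        ((Finset.range n).filter (fun t => x t = -1)).card - 1)/2 < θ n) ∧
      ((1:ℤ) ≤ (((Finset.range n).filter (fun t => x t = 1 ∧ θ t ≤ 0)).card : ℤ) -
        ((Finset.range n).filter (fun t => x t = -1)).card → 0 < θ n) by
    have := (h T le_rfl).1
    omega
  intro n
  induction n with
  | zero =>
    intro _
    simp only [Finset.range_zero, Finset.filter_empty, Finset.card_empty]
    norm_num [hθ0]
  | succ n ih =>
    intro hn
    obtain ⟨ih1, ih2, ih3⟩ := ih (by omega)
    rcases hx n (by omega) with hx1 | hx1
    · -- clean example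
      have hBeq : ((Finset.range (n+1)).filter (fun t => x t = -1)).card =
          ((Finset.range n).filter (fun t => x t = -1)).card := by
        rw [Finset.range_add_one, Finset.filter_insert, if_neg (by rw [hx1]; norm_num)]
      have hθn1 : θ (n+1) = θ n + 1/(1 + Real.exp (θ n)) := by
        rw [hθ n, hx1, mul_one]
      rcases le_or_gt (θ n) 0 with hc | hc
      · -- misclassified
        have hAeq : ((Finset.range (n+1)).filter (fun t => x t = 1 ∧ θ t ≤ 0)).card =
            ((Finset.range n).filter (fun t => x t = 1 ∧ θ t ≤ 0)).card + 1 := by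
          rw [Finset.range_add_one, Finset.filter_insert,
            if_pos (show x n = 1 ∧ θ n ≤ 0 from ⟨hx1, hc⟩),
            Finset.card_insert_of_notMem (by simp)]
        have hV : (((Finset.range n).filter (fun t => x t = 1 ∧ θ t ≤ 0)).card : ℤ) -
            ((Finset.range n).filter (fun t => x t = -1)).card ≤ 0 := by
          by_contra hcon
          exact absurd (ih3 (by omega)) (not_lt.2 hc)
        refine ⟨by omega, ?_, ?_⟩
        · have h12 := aux_half_le (θ n) hc
          rw [hθn1, hAeq, hBeq]
          push_cast
          linarith
        · intro hge
          rw [hAeq, hBeq] at hge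
          push_cast at hge
          have hV0 : (((Finset.range n).filter (fun t => x t = 1 ∧ θ t ≤ 0)).card : ℤ) -
              ((Finset.range n).filter (fun t => x t = -1)).card = 0 := by omega
          have hVr : (((Finset.range n).filter (fun t => x t = 1 ∧ θ t ≤ 0)).card : ℝ) -
              ((Finset.range n).filter (fun t => x t = -1)).card = 0 := by
            exact_mod_cast hV0
          rw [hθn1]
          exact key1 (θ n) (by rw [hVr] at ih2; linarith) hc
      · -- correctly classified
        have hAeq : ((Finset.range (n+1)).filter (fun t => x t = 1 ∧ θ t ≤ 0)).card =
            ((Finset.range n).filter (fun t => x t = 1 ∧ θ t ≤ 0)).card := by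
          rw [Finset.range_add_one, Finset.filter_insert,
              if_neg (fun h => absurd h.2 (not_le.2 hc))]
        have hpos := aux_gt_zero (θ n)
        refine ⟨by omega, ?_, ?_⟩
        · rw [hθn1, hAeq, hBeq]; linarith
        · intro _; rw [hθn1]; linarith
    · -- poison example
      have hAeq : ((Finset.range (n+1)).filter (fun t => x t = 1 ∧ θ t ≤ 0)).card =
          ((Finset.range n).filter (fun t => x t = 1 ∧ θ t ≤ 0)).card := by
        rw [Finset.range_add_one, Finset.filter_insert, if_neg (by rw [hx1]; norm_num)]
      have hBeq : ((Finset.range (n+1)).filter (fun t => x t = -1)).card =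
          ((Finset.range n).filter (fun t => x t = -1)).card + 1 := by
        rw [Finset.range_add_one, Finset.filter_insert, if_pos hx1,
            Finset.card_insert_of_notMem (by simp)]
      have hθn1 : θ (n+1) = θ n - 1/(1 + Real.exp (-θ n)) := by
        rw [hθ n, hx1, mul_neg_one]
        ring
      refine ⟨by omega, ?_, ?_⟩
      · rw [hθn1, hAeq, hBeq]
        push_cast
        rcases le_or_gt (θ n) 0 with hc | hc
        · have h12 := aux_le_half (-θ n) (by linarith)
          linarith
        · rcases le_or_gt ((((Finset.range n).filter (fun t => x t = 1 ∧ θ t ≤ 0)).card : ℤ) -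
              ((Finset.range n).filter (fun t => x t = -1)).card) 0 with hV | hV
          · have hlt := aux_lt_one (-θ n)
            have hVr : (((Finset.range n).filter (fun t => x t = 1 ∧ θ t ≤ 0)).card : ℝ) -
                ((Finset.range n).filter (fun t => x t = -1)).card ≤ 0 := by
              exact_mod_cast hV
            linarith
          · have hV1 : (((Finset.range n).filter (fun t => x t = 1 ∧ θ t ≤ 0)).card : ℤ) -
                ((Finset.range n).filter (fun t => x t = -1)).card = 1 := by omega
            have hVr : (((Finset.range n).filter (fun t => x t = 1 ∧ θ t ≤ 0)).card : ℝ) -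
                ((Finset.range n).filter (fun t => x t = -1)).card = 1 := by
              exact_mod_cast hV1
            have hk := key2 (θ n) hc
            linarith
      · intro hge
        rw [hAeq, hBeq] at hge
        push_cast at hge
        omega
end

section
/- Let (x_t)_{t ∈ ℕ} be real numbers each equal to 1 or −1, and let (θ_t) satisfy θ_{t+1} = θ_t + x_t/(1 + exp(θ_t·x_t)). Suppose for some m, n ∈ ℕ with n ≥ 1 that −1/2 ≤ θ_m ≤ 0 and that among x_m, x_{m+1}, …, x_{m+n−1} there are strictly more indices with x_t = 1 than with x_t = −1. Then there exists t' with m < t' ≤ m + n such that θ_{t'} > 0. -/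
open Classical in
theorem stmt_16 (x : ℕ → ℝ) (hx : ∀ t, x t = 1 ∨ x t = -1)
    (θ : ℕ → ℝ)
    (hθ : ∀ t, θ (t + 1) = θ t + x t / (1 + Real.exp (θ t * x t)))
    (m n : ℕ) (hn : 1 ≤ n)
    (hθm : -(1 / 2) ≤ θ m ∧ θ m ≤ 0)
    (hcount : ((Finset.Ico m (m + n)).filter (fun t => x t = -1)).card <
      ((Finset.Ico m (m + n)).filter (fun t => x t = 1)).card) :
    ∃ t', m < t' ∧ t' ≤ m + n ∧ 0 < θ t' := by
  by_contra hcon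
  push_neg at hcon
  set U : ℕ → ℕ := fun k => ((Finset.Ico m (m + k)).filter (fun t => x t = 1)).card with hU
  set D : ℕ → ℕ := fun k => ((Finset.Ico m (m + k)).filter (fun t => x t = -1)).card with hD
  have key : ∀ k, k ≤ n →
      (1 ≤ U k → θ (m + k) > θ m + ((U k : ℝ) - D k) / 2) ∧
      θ (m + k) ≥ θ m + ((U k : ℝ) - D k) / 2 := by
    intro k
    induction k with
    | zero =>
      intro _
      simp [hU, hD]
    | succ k ih =>
      intro hk1
      have hk : k ≤ n := Nat.le_of_succ_le hk1
      obtain ⟨ihs, ihw⟩ := ih hk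
      have hle : θ (m + k) ≤ 0 := by
        rcases Nat.eq_zero_or_pos k with h0 | h0
        · simpa [h0] using hθm.2
        · exact hcon (m + k) (by omega) (by omega)
      have hnotmem : m + k ∉ Finset.Ico m (m + k) := by simp
      have hins : Finset.Ico m (m + (k + 1)) = insert (m + k) (Finset.Ico m (m + k)) := by
        ext j
        simp only [Finset.mem_Ico, Finset.mem_insert]
        omega
      have hU1 : U (k + 1) = U k + (if x (m + k) = 1 then 1 else 0) := by
        simp only [hU, hins, Finset.filter_insert]
        split
        · rw [Finset.card_insert_of_notMem (fun h => hnotmem (Finset.mem_of_mem_filter _ h))]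
        · simp
      have hD1 : D (k + 1) = D k + (if x (m + k) = -1 then 1 else 0) := by
        simp only [hD, hins, Finset.filter_insert]
        split
        · rw [Finset.card_insert_of_notMem (fun h => hnotmem (Finset.mem_of_mem_filter _ h))]
        · simp
      rcases hx (m + k) with hx1 | hx1
      · -- clean step
        have hUD : U (k + 1) = U k + 1 ∧ D (k + 1) = D k := by
          rw [hU1, hD1, hx1]
          norm_num
        have hlt : θ (m + k) < 0 := by
          rcases lt_or_eq_of_le hle with h | h
          · exact h
          · exfalso
            have hrec := hθ (m + k)
            rw [hx1, mul_one] at hrec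
            have h2 : θ (m + k + 1) ≤ 0 := hcon (m + k + 1) (by omega) (by omega)
            rw [hrec, h] at h2
            norm_num [Real.exp_zero] at h2
        have hstep : (1:ℝ)/2 < x (m + k) / (1 + Real.exp (θ (m + k) * x (m + k))) := by
          rw [hx1, mul_one]
          have hexp : Real.exp (θ (m + k)) < 1 := by
            rw [show (1:ℝ) = Real.exp 0 by simp]
            exact Real.exp_lt_exp.mpr hlt
          rw [div_lt_div_iff₀ two_pos (by positivity)]
          linarith
        have hrec := hθ (m + k)
        have hgt : θ (m + (k + 1)) > θ m + ((U (k+1) : ℝ) - D (k+1)) / 2 := by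
          rw [show m + (k + 1) = (m + k) + 1 by omega, hrec, hUD.1, hUD.2]
          push_cast
          linarith
        exact ⟨fun _ => hgt, le_of_lt hgt⟩
      · -- poisoning step
        have hUD : U (k + 1) = U k ∧ D (k + 1) = D k + 1 := by
          rw [hU1, hD1, hx1]
          norm_num
        have hstep : -(1/2 : ℝ) ≤ x (m + k) / (1 + Real.exp (θ (m + k) * x (m + k))) := by
          rw [hx1, mul_neg_one]
          have hexp : (1:ℝ) ≤ Real.exp (-θ (m + k)) := Real.one_le_exp (by linarith)
          have h2 : (1:ℝ) / (1 + Real.exp (-θ (m + k))) ≤ 1/2 := by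
            rw [div_le_div_iff₀ (by positivity) two_pos]
            linarith
          rw [neg_div]
          linarith
        have hrec := hθ (m + k)
        have hne : m + (k + 1) = (m + k) + 1 := by omega
        constructor
        · intro hUk
          have hUk' : 1 ≤ U k := hUD.1 ▸ hUk
          have hs := ihs hUk'
          rw [hne, hrec, hUD.1, hUD.2]
          push_cast
          linarith
        · rw [hne, hrec, hUD.1, hUD.2]
          push_cast
          linarith
  obtain ⟨ks, _⟩ := key n le_rfl
  have hU1 : 1 ≤ U n := by
    have : D n < U n := hcount
    omega
  have hfin := ks hU1
  have hDU : (D n : ℝ) + 1 ≤ U n := by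
    have h' : D n + 1 ≤ U n := hcount
    exact_mod_cast h'
  have hlast : θ (m + n) ≤ 0 := hcon (m + n) (by omega) le_rfl
  have := hθm.1
  linarith
end
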